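/- The explicit functions x₁(t) = (t - √(t²+4))/2, x₂(t) = (t + √(t²+4))/2, x₃(t) = t, with y₁ = y₂ = -1 and y₃ = -2, solve the point-vortex equations for three vortices with circulations (1, 1, -1); moreover x₁(t) → 0 as t → +∞ and x₂(t) → 0 as t → -∞. -/

import Mathlib

/-- x-coordinate of vortex 1 in the borderline Θ = 0 scattering solution. -/
noncomputable def X1 (t : ℝ) : ℝ := (t - Real.sqrt (t ^ 2 + 4)) / 2

/-- x-coordinate of vortex 2 in the borderline Θ = 0 scattering solution. -/
noncomputable def X2 (t : ℝ) : ℝ := (t + Real.sqrt (t ^ 2 + 4)) / 2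

/-- x-coordinate of vortex 3 in the borderline Θ = 0 scattering solution. -/
def X3 (t : ℝ) : ℝ := t

lemma sqrt_deriv (t : ℝ) :
    HasDerivAt (fun u : ℝ => Real.sqrt (u ^ 2 + 4)) (t / Real.sqrt (t ^ 2 + 4)) t := by
  have h4 : (0:ℝ) < t ^ 2 + 4 := by positivity
  have h := ((hasDerivAt_pow 2 t).add_const 4).sqrt (ne_of_gt h4)
  convert h using 1
  field_simp
  ring

set_option maxHeartbeats 1000000 in
/-- The explicit functions x₁ = (t - √(t²+4))/2, x₂ = (t + √(t²+4))/2, x₃ = t,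
y₁ = y₂ = -1, y₃ = -2 solve the point-vortex equations with circulations
(1,1,-1), and x₁ → 0 as t → +∞, x₂ → 0 as t → -∞. -/
theorem borderline_scattering_solution :
    (∀ t : ℝ,
      HasDerivAt X1
        (-(1 * ((-1 : ℝ) - (-1)) / ((X1 t - X2 t) ^ 2 + ((-1 : ℝ) - (-1)) ^ 2)
          + (-1) * ((-1 : ℝ) - (-2)) / ((X1 t - X3 t) ^ 2 + ((-1 : ℝ) - (-2)) ^ 2))) t ∧
      HasDerivAt (fun _ : ℝ => (-1 : ℝ))
        (1 * (X1 t - X2 t) / ((X1 t - X2 t) ^ 2 + ((-1 : ℝ) - (-1)) ^ 2)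
          + (-1) * (X1 t - X3 t) / ((X1 t - X3 t) ^ 2 + ((-1 : ℝ) - (-2)) ^ 2)) t ∧
      HasDerivAt X2
        (-(1 * ((-1 : ℝ) - (-1)) / ((X2 t - X1 t) ^ 2 + ((-1 : ℝ) - (-1)) ^ 2)
          + (-1) * ((-1 : ℝ) - (-2)) / ((X2 t - X3 t) ^ 2 + ((-1 : ℝ) - (-2)) ^ 2))) t ∧
      HasDerivAt (fun _ : ℝ => (-1 : ℝ))
        (1 * (X2 t - X1 t) / ((X2 t - X1 t) ^ 2 + ((-1 : ℝ) - (-1)) ^ 2)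
          + (-1) * (X2 t - X3 t) / ((X2 t - X3 t) ^ 2 + ((-1 : ℝ) - (-2)) ^ 2)) t ∧
      HasDerivAt X3
        (-(1 * ((-2 : ℝ) - (-1)) / ((X3 t - X1 t) ^ 2 + ((-2 : ℝ) - (-1)) ^ 2)
          + 1 * ((-2 : ℝ) - (-1)) / ((X3 t - X2 t) ^ 2 + ((-2 : ℝ) - (-1)) ^ 2))) t ∧
      HasDerivAt (fun _ : ℝ => (-2 : ℝ))
        (1 * (X3 t - X1 t) / ((X3 t - X1 t) ^ 2 + ((-2 : ℝ) - (-1)) ^ 2)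
          + 1 * (X3 t - X2 t) / ((X3 t - X2 t) ^ 2 + ((-2 : ℝ) - (-1)) ^ 2)) t) ∧
    Filter.Tendsto X1 Filter.atTop (nhds 0) ∧
    Filter.Tendsto X2 Filter.atBot (nhds 0) := by
  refine ⟨fun t => ?_, ?_, ?_⟩
  · set s := Real.sqrt (t ^ 2 + 4) with hsdef
    have h4 : (0:ℝ) < t ^ 2 + 4 := by positivity
    have hs : 0 < s := Real.sqrt_pos.mpr h4
    have hs2 : s ^ 2 = t ^ 2 + 4 := Real.sq_sqrt h4.le
    have hst : t < s := by nlinarith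
    have hst' : -s < t := by nlinarith
    have hA : X1 t - X2 t = -s := by simp only [X1, X2]; ring
    have hA' : X2 t - X1 t = s := by simp only [X1, X2]; ring
    have hB : X1 t - X3 t = -((t + s) / 2) := by simp only [X1, X3]; ring
    have hC : X2 t - X3 t = (s - t) / 2 := by simp only [X2, X3]; ring
    have hD : X3 t - X1 t = (t + s) / 2 := by simp only [X1, X3]; ring
    have hE : X3 t - X2 t = (t - s) / 2 := by simp only [X2, X3]; ring
    have hd1 : HasDerivAt X1 ((1 - t / s) / 2) t := by
      unfold X1
      exact ((hasDerivAt_id t).sub (sqrt_deriv t)).div_const 2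
    have hd2 : HasDerivAt X2 ((1 + t / s) / 2) t := by
      unfold X2
      exact ((hasDerivAt_id t).add (sqrt_deriv t)).div_const 2
    refine ⟨?_, ?_, ?_, ?_, ?_, ?_⟩
    · convert hd1 using 1
      rw [hA, hB]
      field_simp
      linear_combination (-(s ^ 2 * (t + s))) * hs2
    · refine (hasDerivAt_const t (-1 : ℝ)).congr_deriv (Eq.symm ?_)
      rw [hA, hB]
      field_simp
      nlinarith [hs2, hs]
    · convert hd2 using 1
      rw [hA', hC]
      field_simp
      linear_combination (-(s ^ 2 * (s - t))) * hs2
    · refine (hasDerivAt_const t (-1 : ℝ)).congr_deriv (Eq.symm ?_)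
      rw [hA', hC]
      field_simp
      nlinarith [hs2, hs]
    · have hd3 : HasDerivAt X3 1 t := by unfold X3; exact hasDerivAt_id t
      convert hd3 using 1
      rw [hD, hE]
      field_simp
      nlinarith [hs2, hs]
    · refine (hasDerivAt_const t (-2 : ℝ)).congr_deriv (Eq.symm ?_)
      rw [hD, hE]
      field_simp
      nlinarith [hs2, hs]
  · have heq : ∀ t : ℝ, X1 t = -2 / (t + Real.sqrt (t ^ 2 + 4)) := by
      intro t
      have h4 : (0:ℝ) < t ^ 2 + 4 := by positivity
      have hs : 0 < Real.sqrt (t ^ 2 + 4) := Real.sqrt_pos.mpr h4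
      have hs2 : Real.sqrt (t ^ 2 + 4) ^ 2 = t ^ 2 + 4 := Real.sq_sqrt h4.le
      have hne : t + Real.sqrt (t ^ 2 + 4) > 0 := by nlinarith
      simp only [X1]
      field_simp
      nlinarith [hs2]
    have hden : Filter.Tendsto (fun t : ℝ => t + Real.sqrt (t ^ 2 + 4))
        Filter.atTop Filter.atTop :=
      Filter.tendsto_atTop_mono (fun t => le_add_of_nonneg_right (Real.sqrt_nonneg _))
        Filter.tendsto_id
    have := Filter.Tendsto.div_atTop (tendsto_const_nhds (x := (-2:ℝ))) hden
    simpa [funext heq] using this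
  · have heq : ∀ t : ℝ, X2 t = 2 / (Real.sqrt (t ^ 2 + 4) - t) := by
      intro t
      have h4 : (0:ℝ) < t ^ 2 + 4 := by positivity
      have hs : 0 < Real.sqrt (t ^ 2 + 4) := Real.sqrt_pos.mpr h4
      have hs2 : Real.sqrt (t ^ 2 + 4) ^ 2 = t ^ 2 + 4 := Real.sq_sqrt h4.le
      have hne : Real.sqrt (t ^ 2 + 4) - t > 0 := by nlinarith
      simp only [X2]
      field_simp
      nlinarith [hs2]
    have hden : Filter.Tendsto (fun t : ℝ => Real.sqrt (t ^ 2 + 4) - t)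
        Filter.atBot Filter.atTop := by
      refine Filter.tendsto_atTop_mono (fun t => ?_) Filter.tendsto_neg_atBot_atTop
      have := Real.sqrt_nonneg (t ^ 2 + 4)
      simp only [sub_eq_add_neg]
      linarith
    have := Filter.Tendsto.div_atTop (tendsto_const_nhds (x := (2:ℝ))) hden
    simpa [funext heq] using this
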